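/- Let H be a bialgebra over a commutative ring R, n a natural number, and t^1, …, t^n, C : H → R and f_j^i : H → R (for 1 ≤ i,j ≤ n) R-linear functionals satisfying, for all a, b ∈ H and all i: t^i(a·b) = C(a) t^i(b) + Σ_j t^j(a) f_j^i(b). Define d : H → H^n by (d a)_i = t^i_L(a) = Σ a_(1) t^i(a_(2)); define c : H → H by c(a) = Σ a_(1) C(a_(2)); define the left action (h • v)_i = h · v_i for h ∈ H, v ∈ H^n; and define the right action of H on H^n by (v ◁ b)_i = Σ_j Σ v_j · b_(1) · f_j^i(b_(2)). Then for all a, b ∈ H: d(a·b) = c(a) • d(b) + (d a) ◁ b. (Generalized Leibniz rule of the Sudbery-type differential calculus, equation (16).) -/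
import Mathlib


open TensorProduct

/-- The left-invariant vector field `t_L(a) = Σ a_(1) t(a_(2))`. -/
noncomputable def tL (R C : Type*) [CommRing R] [AddCommGroup C] [Module R C]
    [Coalgebra R C] (t : C →ₗ[R] R) : C →ₗ[R] C :=
  (TensorProduct.rid R C).toLinearMap ∘ₗ (LinearMap.lTensor C t) ∘ₗ Coalgebra.comul

/-- `G s` applies `s` to the second leg of a tensor. -/
noncomputable def Gmap (R H : Type*) [CommRing R] [Ring H] [Algebra R H]
    (s : H →ₗ[R] R) : H ⊗[R] H →ₗ[R] H :=
  (TensorProduct.rid R H).toLinearMap ∘ₗ (LinearMap.lTensor H s)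

lemma Gmap_tmul (R H : Type*) [CommRing R] [Ring H] [Algebra R H]
    (s : H →ₗ[R] R) (x y : H) : Gmap R H s (x ⊗ₜ y) = s y • x := by
  simp [Gmap]

lemma tL_eq (R H : Type*) [CommRing R] [Ring H] [Bialgebra R H]
    (s : H →ₗ[R] R) (a : H) : tL R H s a = Gmap R H s (Coalgebra.comul a) := rfl

/-- the generalized Leibniz rule of the Sudbery-type differential calculus.
If the functionals satisfy `t^i(a·b) = C(a) t^i(b) + Σ_j t^j(a) f_j^i(b)`, then
componentwise `d(a·b) = c(a) • d(b) + (d a) ◁ b`, i.e.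
`t^i_L(a·b) = c(a) · t^i_L(b) + Σ_j t^j_L(a) · (Σ b_(1) f_j^i(b_(2)))`
where `c(a) = Σ a_(1) C(a_(2)) = C_L(a)` and `Σ b_(1) f_j^i(b_(2)) = (f_j^i)_L(b)`. -/
theorem generalized_leibniz (R H : Type*) [CommRing R] [Ring H] [Bialgebra R H] {n : ℕ}
    (t : Fin n → (H →ₗ[R] R)) (C : H →ₗ[R] R) (f : Fin n → Fin n → (H →ₗ[R] R))
    (hyp : ∀ (a b : H) (i : Fin n),
      t i (a * b) = C a * t i b + ∑ j, t j a * f j i b) :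
    ∀ (a b : H) (i : Fin n),
      tL R H (t i) (a * b) =
        tL R H C a * tL R H (t i) b + ∑ j, tL R H (t j) a * tL R H (f j i) b := by
  have key : ∀ (u v : H ⊗[R] H) (i : Fin n),
      Gmap R H (t i) (u * v) =
        Gmap R H C u * Gmap R H (t i) v + ∑ j, Gmap R H (t j) u * Gmap R H (f j i) v := by
    intro u v i
    induction u using TensorProduct.induction_on with
    | zero => simp
    | add u₁ u₂ h₁ h₂ =>
        simp only [add_mul, map_add, h₁, h₂, Finset.sum_add_distrib]
        abel
    | tmul a₁ a₂ =>
        induction v using TensorProduct.induction_on with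
        | zero => simp
        | add v₁ v₂ h₁ h₂ =>
            simp only [mul_add, map_add, h₁, h₂, Finset.sum_add_distrib]
            abel
        | tmul b₁ b₂ =>
            rw [Algebra.TensorProduct.tmul_mul_tmul]
            simp only [Gmap_tmul, hyp a₂ b₂ i, add_smul, Finset.sum_smul,
              smul_mul_smul_comm, mul_smul]
  intro a b i
  simp only [tL_eq, Bialgebra.comul_mul]
  exact key _ _ i
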